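/- For each n ≥ 0, let τ : C_n → C_n (where C_n = B^{⊗(n+1)} ⊗ A) be the k-linear map defined on pure tensors by τ(b₀⊗⋯⊗b_n⊗a) = σ((b₀⊗⋯⊗b_{n−1}) ⊗ R(b_n ⊗ a)), where σ moves the last tensor factor (lying in B) to the front; explicitly, writing R(b_n ⊗ a) = Σ a^R ⊗ b_n^R, τ(b₀,…,b_n | a) = Σ (b_n^R, b₀,…,b_{n−1} | a^R). Then for every x ∈ C_n, the element τ^{n+1}(x) − x lies in the subspace span{ a·y − y·a : a ∈ A, y ∈ C_n } of C_n, where a·y and y·a denote the left and right A-actions on C_n. In particular τ induces an operator of order n+1 on the coinvariant space C_n^A = C_n / span{a·y − y·a}. -/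

import Mathlib

open TensorProduct

/-- A linear map `R : B ⊗ A → A ⊗ B` is *quasitriangular* if
`R∘(m_B ⊗ id_A) = (id_A ⊗ m_B)∘(R ⊗ id_B)∘(id_B ⊗ R)` and
`R∘(id_B ⊗ m_A) = (m_A ⊗ id_B)∘(id_A ⊗ R)∘(R ⊗ id_A)`,
with the evident associators inserted. -/
def Quasitriangular (k A B : Type) [Field k] [Ring A] [Algebra k A] [Ring B] [Algebra k B]
    (R : B ⊗[k] A →ₗ[k] A ⊗[k] B) : Prop :=
  (R ∘ₗ LinearMap.rTensor A (LinearMap.mul' k B)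
      = LinearMap.lTensor A (LinearMap.mul' k B)
        ∘ₗ (TensorProduct.assoc k A B B).toLinearMap
        ∘ₗ LinearMap.rTensor B R
        ∘ₗ (TensorProduct.assoc k B A B).symm.toLinearMap
        ∘ₗ LinearMap.lTensor B R
        ∘ₗ (TensorProduct.assoc k B B A).toLinearMap)
  ∧ (R ∘ₗ LinearMap.lTensor B (LinearMap.mul' k A)
      = LinearMap.rTensor B (LinearMap.mul' k A)
        ∘ₗ (TensorProduct.assoc k A A B).symm.toLinearMap
        ∘ₗ LinearMap.lTensor A R
        ∘ₗ (TensorProduct.assoc k A B A).toLinearMap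
        ∘ₗ LinearMap.rTensor A R
        ∘ₗ (TensorProduct.assoc k B A A).symm.toLinearMap)

/-- A linear map `R : B ⊗ A → A ⊗ B` is *normal* if `R(1_B ⊗ a) = a ⊗ 1_B` and
`R(b ⊗ 1_A) = 1_A ⊗ b`. -/
def RNormal (k A B : Type) [Field k] [Ring A] [Algebra k A] [Ring B] [Algebra k B]
    (R : B ⊗[k] A →ₗ[k] A ⊗[k] B) : Prop :=
  (∀ a : A, R ((1 : B) ⊗ₜ[k] a) = a ⊗ₜ[k] (1 : B))
  ∧ (∀ b : B, R (b ⊗ₜ[k] (1 : A)) = (1 : A) ⊗ₜ[k] b)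

variable (k : Type) [Field k]

/-- `Tpow k M n` is the `(n+1)`-fold tensor power `M ⊗ M ⊗ ⋯ ⊗ M`. -/
noncomputable def Tpow (M : ModuleCat.{0} k) : ℕ → ModuleCat.{0} k
  | 0 => M
  | (n+1) => ModuleCat.of k (↥M ⊗[k] ↥(Tpow M n))

/-- moving the last tensor factor out: `M^{⊗(n+2)} ≃ M^{⊗(n+1)} ⊗ M`. -/
noncomputable def ePow (M : ModuleCat.{0} k) : ∀ n : ℕ,
    (↥(Tpow k M (n+1)) ≃ₗ[k] ↥(Tpow k M n) ⊗[k] ↥M)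
  | 0 => LinearEquiv.refl k (↥M ⊗[k] ↥M)
  | (n+1) => (TensorProduct.congr (LinearEquiv.refl k ↥M) (ePow M n)).trans
      (TensorProduct.assoc k ↥M ↥(Tpow k M n) ↥M).symm

variable (A B : Type) [Ring A] [Algebra k A] [Ring B] [Algebra k B]

/-- The `(q+1)`-fold tensor power of `A`. -/
noncomputable abbrev TA (q : ℕ) : Type := ↥(Tpow k (ModuleCat.of k A) q)
/-- The `(p+1)`-fold tensor power of `B`. -/
noncomputable abbrev TB (p : ℕ) : Type := ↥(Tpow k (ModuleCat.of k B) p)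

variable {k A B}

/-- `Θ_q = R_{q+1,q+2} ∘ ⋯ ∘ R_{2,3} ∘ R_{1,2} : B ⊗ A^{⊗(q+1)} → A^{⊗(q+1)} ⊗ B`. -/
noncomputable def Theta (R : B ⊗[k] A →ₗ[k] A ⊗[k] B) :
    ∀ q : ℕ, (B ⊗[k] TA k A q) →ₗ[k] (TA k A q ⊗[k] B)
  | 0 => R
  | (q+1) =>
      (TensorProduct.assoc k A (TA k A q) B).symm.toLinearMap
      ∘ₗ LinearMap.lTensor A (Theta R q)
      ∘ₗ (TensorProduct.assoc k A B (TA k A q)).toLinearMap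
      ∘ₗ LinearMap.rTensor (TA k A q) R
      ∘ₗ (TensorProduct.assoc k B A (TA k A q)).symm.toLinearMap

/-- `Γ_p = R⁻¹_{p+1,p+2} ∘ ⋯ ∘ R⁻¹_{2,3} ∘ R⁻¹_{1,2} : A ⊗ B^{⊗(p+1)} → B^{⊗(p+1)} ⊗ A`. -/
noncomputable def Gamma (Ri : A ⊗[k] B →ₗ[k] B ⊗[k] A) :
    ∀ p : ℕ, (A ⊗[k] TB k B p) →ₗ[k] (TB k B p ⊗[k] A)
  | 0 => Ri
  | (p+1) =>
      (TensorProduct.assoc k B (TB k B p) A).symm.toLinearMap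
      ∘ₗ LinearMap.lTensor B (Gamma Ri p)
      ∘ₗ (TensorProduct.assoc k B A (TB k B p)).toLinearMap
      ∘ₗ LinearMap.rTensor (TB k B p) Ri
      ∘ₗ (TensorProduct.assoc k A B (TB k B p)).symm.toLinearMap

/-- The paracyclic operator `t_{p,q} = σ ∘ (id_B^{⊗p} ⊗ Θ_q)` on `B^{⊗(p+1)} ⊗ A^{⊗(q+1)}`,
where `σ` cyclically moves the last tensor factor (which lies in `B`) to the front. -/
noncomputable def tOp (R : B ⊗[k] A →ₗ[k] A ⊗[k] B) :
    ∀ (p q : ℕ), (TB k B p ⊗[k] TA k A q) →ₗ[k] (TB k B p ⊗[k] TA k A q)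
  | 0, q => (TensorProduct.comm k (TA k A q) B).toLinearMap ∘ₗ Theta R q
  | (p+1), q =>
      (TensorProduct.assoc k B (TB k B p) (TA k A q)).symm.toLinearMap
      ∘ₗ (TensorProduct.comm k (TB k B p ⊗[k] TA k A q) B).toLinearMap
      ∘ₗ (TensorProduct.assoc k (TB k B p) (TA k A q) B).symm.toLinearMap
      ∘ₗ LinearMap.lTensor (TB k B p) (Theta R q)
      ∘ₗ (TensorProduct.assoc k (TB k B p) B (TA k A q)).toLinearMap
      ∘ₗ LinearMap.rTensor (TA k A q) (ePow k (ModuleCat.of k B) p).toLinearMap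

/-- The paracyclic operator `t̄_{p,q}` on `B^{⊗(p+1)} ⊗ A^{⊗(q+1)}`, given by
`t̄(b₀⊗⋯⊗b_p⊗a₀⊗⋯⊗a_q) = Γ_p(a_q ⊗ b₀⊗⋯⊗b_p) ⊗ a₀⊗⋯⊗a_{q−1}`. -/
noncomputable def tbarOp (Ri : A ⊗[k] B →ₗ[k] B ⊗[k] A) :
    ∀ (p q : ℕ), (TB k B p ⊗[k] TA k A q) →ₗ[k] (TB k B p ⊗[k] TA k A q)
  | p, 0 => Gamma Ri p ∘ₗ (TensorProduct.comm k (TB k B p) A).toLinearMap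
  | p, (q+1) =>
      (TensorProduct.assoc k (TB k B p) A (TA k A q)).toLinearMap
      ∘ₗ LinearMap.rTensor (TA k A q) (Gamma Ri p)
      ∘ₗ (TensorProduct.assoc k A (TB k B p) (TA k A q)).symm.toLinearMap
      ∘ₗ (TensorProduct.comm k (TB k B p ⊗[k] TA k A q) A).toLinearMap
      ∘ₗ (TensorProduct.assoc k (TB k B p) (TA k A q) A).symm.toLinearMap
      ∘ₗ LinearMap.lTensor (TB k B p) (ePow k (ModuleCat.of k A) q).toLinearMap

/-- The left `A`-action `a · (b₀⊗⋯⊗b_n⊗a₀) = (id^{⊗(n+1)} ⊗ m_A)(Γ_n(a ⊗ b₀⊗⋯⊗b_n) ⊗ a₀)`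
on `C_n = B^{⊗(n+1)} ⊗ A`, as a linear map `A ⊗ C_n → C_n`. -/
noncomputable def leftAct {k A B : Type} [Field k] [Ring A] [Algebra k A] [Ring B] [Algebra k B]
    (Ri : A ⊗[k] B →ₗ[k] B ⊗[k] A) (n : ℕ) :
    (A ⊗[k] (TB k B n ⊗[k] A)) →ₗ[k] (TB k B n ⊗[k] A) :=
  LinearMap.lTensor (TB k B n) (LinearMap.mul' k A)
  ∘ₗ (TensorProduct.assoc k (TB k B n) A A).toLinearMap
  ∘ₗ LinearMap.rTensor A (Gamma Ri n)
  ∘ₗ (TensorProduct.assoc k A (TB k B n) A).symm.toLinearMap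

/-- The right `A`-action `(b₀⊗⋯⊗b_n⊗a₀) · a = b₀⊗⋯⊗b_n⊗(a₀a)` on `C_n = B^{⊗(n+1)} ⊗ A`,
as a linear map `C_n ⊗ A → C_n`. -/
noncomputable def rightAct {k A B : Type} [Field k] [Ring A] [Algebra k A] [Ring B] [Algebra k B]
    (n : ℕ) : ((TB k B n ⊗[k] A) ⊗[k] A) →ₗ[k] (TB k B n ⊗[k] A) :=
  LinearMap.lTensor (TB k B n) (LinearMap.mul' k A)
  ∘ₗ (TensorProduct.assoc k (TB k B n) A A).toLinearMap

/-- The operator `τ` on `C_n = B^{⊗(n+1)} ⊗ A`, defined on pure tensors by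
`τ(b₀,…,b_n | a) = Σ (b_n^R, b₀,…,b_{n−1} | a^R)` where `R(b_n ⊗ a) = Σ a^R ⊗ b_n^R`. -/
noncomputable def tauOp {k A B : Type} [Field k] [Ring A] [Algebra k A] [Ring B] [Algebra k B]
    (R : B ⊗[k] A →ₗ[k] A ⊗[k] B) :
    ∀ n : ℕ, (TB k B n ⊗[k] A) →ₗ[k] (TB k B n ⊗[k] A)
  | 0 => (TensorProduct.comm k A B).toLinearMap ∘ₗ R
  | (n+1) =>
      LinearMap.rTensor A (TensorProduct.comm k (TB k B n) B).toLinearMap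
      ∘ₗ (TensorProduct.assoc k (TB k B n) B A).symm.toLinearMap
      ∘ₗ LinearMap.lTensor (TB k B n) (TensorProduct.comm k A B).toLinearMap
      ∘ₗ LinearMap.lTensor (TB k B n) R
      ∘ₗ (TensorProduct.assoc k (TB k B n) B A).toLinearMap
      ∘ₗ LinearMap.rTensor A (ePow k (ModuleCat.of k B) n).toLinearMap

attribute [reducible] Tpow

section Aux
variable {k A B : Type} [Field k] [Ring A] [Algebra k A] [Ring B] [Algebra k B]

/-- `Φ_n = R_{1,2}∘⋯∘R_{n+1,n+2} : B^{⊗(n+1)} ⊗ A → A ⊗ B^{⊗(n+1)}`. -/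
noncomputable def Phi (R : B ⊗[k] A →ₗ[k] A ⊗[k] B) :
    ∀ n : ℕ, (TB k B n ⊗[k] A) →ₗ[k] (A ⊗[k] TB k B n)
  | 0 => R
  | (n+1) =>
      (TensorProduct.assoc k A B (TB k B n)).toLinearMap
      ∘ₗ LinearMap.rTensor (TB k B n) R
      ∘ₗ (TensorProduct.assoc k B A (TB k B n)).symm.toLinearMap
      ∘ₗ LinearMap.lTensor B (Phi R n)
      ∘ₗ (TensorProduct.assoc k B (TB k B n) A).toLinearMap

/-- insertion of a `B`-factor after position `j`. -/
noncomputable def ins : ∀ (n j : ℕ), (B ⊗[k] TB k B n) →ₗ[k] TB k B (n+1)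
  | _, 0 => LinearMap.id
  | 0, (_+1) => (TensorProduct.comm k B B).toLinearMap
  | (n+1), (j+1) =>
      LinearMap.lTensor B (ins n j)
      ∘ₗ (TensorProduct.assoc k B B (TB k B n)).toLinearMap
      ∘ₗ LinearMap.rTensor (TB k B n) (TensorProduct.comm k B B).toLinearMap
      ∘ₗ (TensorProduct.assoc k B B (TB k B n)).symm.toLinearMap

end Aux
section Aux2
variable {k A B : Type} [Field k] [Ring A] [Algebra k A] [Ring B] [Algebra k B]

lemma ePow_succ_tmul (M : ModuleCat.{0} k) (n : ℕ) (m : ↥M) (t : ↥(Tpow k M (n+1))) :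
    ePow k M (n+1) (m ⊗ₜ[k] t)
      = (TensorProduct.assoc k ↥M ↥(Tpow k M n) ↥M).symm (m ⊗ₜ[k] ePow k M n t) := rfl

lemma ins_succ_tmul (n j : ℕ) (b c : B) (w : TB k B n) :
    ins (n+1) (j+1) (b ⊗ₜ[k] (c ⊗ₜ[k] w)) = c ⊗ₜ[k] ins n j (b ⊗ₜ[k] w) := rfl

lemma ins_zero (n : ℕ) (x : B ⊗[k] TB k B n) : ins n 0 x = x := by
  cases n <;> rfl
end Aux2

section Aux3
variable {k A B : Type} [Field k] [Ring A] [Algebra k A] [Ring B] [Algebra k B]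

/-- induction principle for elements of `TB k B (n+1)` as a tensor product. -/
lemma TB_induction (n : ℕ) {motive : TB k B (n+1) → Prop}
    (zero : motive 0)
    (tmul : ∀ (b : B) (w : TB k B n), motive (b ⊗ₜ[k] w))
    (add : ∀ x y, motive x → motive y → motive (x + y)) :
    ∀ x, motive x := fun x =>
  TensorProduct.induction_on (motive := motive) x zero tmul add

lemma rT_rT_cancel {M N P : Type} [AddCommGroup M] [Module k M] [AddCommGroup N] [Module k N]
    [AddCommGroup P] [Module k P] (e : M ≃ₗ[k] N) (z : M ⊗[k] P) :
    LinearMap.rTensor P e.symm.toLinearMap (LinearMap.rTensor P e.toLinearMap z) = z := by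
  induction z using TensorProduct.induction_on with
  | zero => simp [TensorProduct.tmul_zero, TensorProduct.zero_tmul]
  | tmul m p => simp
  | add x y hx hy => simp [map_add, hx, hy]

lemma gammaPhi (R : B ⊗[k] A ≃ₗ[k] A ⊗[k] B) :
    ∀ n (x : TB k B n ⊗[k] A),
      Gamma R.symm.toLinearMap n (Phi R.toLinearMap n x) = x := by
  intro n
  induction n with
  | zero =>
      intro x
      show R.symm.toLinearMap (R.toLinearMap x) = x
      simp
  | succ n ih =>
      have key : ∀ (b : B) (y : A ⊗[k] TB k B n),
          Gamma R.symm.toLinearMap (n+1)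
            ((TensorProduct.assoc k A B (TB k B n))
              (LinearMap.rTensor (TB k B n) R.toLinearMap
                ((TensorProduct.assoc k B A (TB k B n)).symm (b ⊗ₜ[k] y))))
          = (TensorProduct.assoc k B (TB k B n) A).symm
              (b ⊗ₜ[k] Gamma R.symm.toLinearMap n y) := by
        intro b y
        induction y using TensorProduct.induction_on with
        | zero => simp [TensorProduct.tmul_zero]
        | tmul a w =>
            simp only [Gamma, LinearMap.coe_comp, Function.comp_apply, LinearEquiv.coe_coe,
              TensorProduct.assoc_tmul, TensorProduct.assoc_symm_tmul, LinearMap.rTensor_tmul,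
              LinearMap.lTensor_tmul, LinearEquiv.symm_apply_apply, LinearEquiv.symm_apply_apply]
        | add y₁ y₂ h₁ h₂ =>
            simp only [TensorProduct.tmul_add, map_add, h₁, h₂]
      intro x
      induction x using TensorProduct.induction_on with
      | zero => simp [TensorProduct.tmul_zero, TensorProduct.zero_tmul]
      | tmul t a =>
          induction t using TB_induction with
          | zero => simp [TensorProduct.zero_tmul]
          | tmul b w =>
              have hPhi : Phi R.toLinearMap (n+1) ((b ⊗ₜ[k] w) ⊗ₜ[k] a)
                  = (TensorProduct.assoc k A B (TB k B n))
                      (LinearMap.rTensor (TB k B n) R.toLinearMap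
                        ((TensorProduct.assoc k B A (TB k B n)).symm
                          (b ⊗ₜ[k] Phi R.toLinearMap n (w ⊗ₜ[k] a)))) := rfl
              rw [hPhi, key, ih]
              rfl
          | add t₁ t₂ h₁ h₂ =>
              simp only [TensorProduct.add_tmul, map_add, h₁, h₂]
      | add x₁ x₂ h₁ h₂ => simp only [map_add, h₁, h₂]

end Aux3
section Aux4
set_option synthInstance.maxHeartbeats 1000000
set_option maxHeartbeats 1000000
variable {k A B : Type} [Field k] [Ring A] [Algebra k A] [Ring B] [Algebra k B]

lemma ins_zero_eq (n : ℕ) : (ins n 0 : (B ⊗[k] TB k B n) →ₗ[k] TB k B (n+1)) = LinearMap.id := by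
  cases n <;> rfl

lemma ePow_ins_last : ∀ (n : ℕ) (b : B) (w : TB k B n),
    ePow k (ModuleCat.of k B) n (ins n (n+1) (b ⊗ₜ[k] w)) = w ⊗ₜ[k] b := by
  intro n
  induction n with
  | zero => intro b w; rfl
  | succ n ih =>
      intro b w
      induction w using TB_induction with
      | zero => simp only [TensorProduct.tmul_zero, TensorProduct.zero_tmul, map_zero]
      | tmul c w' =>
          rw [ins_succ_tmul, ePow_succ_tmul, ih]
          rfl
      | add w₁ w₂ h₁ h₂ =>
          simp only [TensorProduct.tmul_add, map_add, h₁, h₂, TensorProduct.add_tmul]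

lemma ePow_ins : ∀ (n j : ℕ), j ≤ n + 1 → ∀ (b : B) (w : TB k B (n+1)),
    ePow k (ModuleCat.of k B) (n+1) (ins (n+1) j (b ⊗ₜ[k] w))
      = LinearMap.rTensor B (ins n j)
          ((TensorProduct.assoc k B (TB k B n) B).symm
            (b ⊗ₜ[k] ePow k (ModuleCat.of k B) n w)) := by
  intro n
  induction n with
  | zero =>
      intro j hj b w
      interval_cases j
      · rw [ins_zero, ePow_succ_tmul, ins_zero_eq, LinearMap.rTensor_id]; rfl
      · induction w using TB_induction with
        | zero => simp only [TensorProduct.tmul_zero, TensorProduct.zero_tmul, map_zero]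
        | tmul c d => rfl
        | add w₁ w₂ h₁ h₂ =>
            simp only [TensorProduct.tmul_add, map_add, h₁, h₂]
  | succ n ih =>
      intro j hj b w
      match j, hj with
      | 0, _ =>
          rw [ins_zero, ePow_succ_tmul, ins_zero_eq, LinearMap.rTensor_id]; rfl
      | (j+1), hj =>
          have hj' : j ≤ n + 1 := by omega
          induction w using TB_induction with
          | zero => simp only [TensorProduct.tmul_zero, TensorProduct.zero_tmul, map_zero]
          | tmul c w' =>
              rw [ins_succ_tmul, ePow_succ_tmul, ih j hj', ePow_succ_tmul]
              generalize ePow k (ModuleCat.of k B) n w' = u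
              induction u using TensorProduct.induction_on with
              | zero => simp only [TensorProduct.tmul_zero, TensorProduct.zero_tmul, map_zero]
              | tmul v d => rfl
              | add u₁ u₂ h₁ h₂ =>
                  simp only [TensorProduct.tmul_add, map_add, h₁, h₂]
          | add w₁ w₂ h₁ h₂ =>
              simp only [TensorProduct.tmul_add, map_add, h₁, h₂]

end Aux4
section Aux5
set_option synthInstance.maxHeartbeats 1000000
set_option maxHeartbeats 1000000
variable {k A B : Type} [Field k] [Ring A] [Algebra k A] [Ring B] [Algebra k B]

/-- the tail of `tauOp (n+1)` after the `R`-application. -/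
noncomputable def GG (n : ℕ) : (TB k B n ⊗[k] (A ⊗[k] B)) →ₗ[k] (TB k B (n+1) ⊗[k] A) :=
  LinearMap.rTensor A (TensorProduct.comm k (TB k B n) B).toLinearMap
  ∘ₗ (TensorProduct.assoc k (TB k B n) B A).symm.toLinearMap
  ∘ₗ LinearMap.lTensor (TB k B n) (TensorProduct.comm k A B).toLinearMap

/-- the part of `tauOp (n+1)` after the `ePow` re-coordinatization. -/
noncomputable def Psi (R : B ⊗[k] A →ₗ[k] A ⊗[k] B) (n : ℕ) :
    ((TB k B n ⊗[k] B) ⊗[k] A) →ₗ[k] (TB k B (n+1) ⊗[k] A) :=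
  GG n ∘ₗ LinearMap.lTensor (TB k B n) R
    ∘ₗ (TensorProduct.assoc k (TB k B n) B A).toLinearMap

lemma tauOp_zero_eval (R : B ⊗[k] A →ₗ[k] A ⊗[k] B) (x : B ⊗[k] A) :
    tauOp R 0 x = TensorProduct.comm k A B (R x) := rfl

lemma tauOp_succ_eval (R : B ⊗[k] A →ₗ[k] A ⊗[k] B) (n : ℕ) (t : TB k B (n+1)) (a : A) :
    tauOp R (n+1) (t ⊗ₜ[k] a)
      = Psi R n (ePow k (ModuleCat.of k B) n t ⊗ₜ[k] a) := rfl

lemma Psi_tmul (R : B ⊗[k] A →ₗ[k] A ⊗[k] B) (n : ℕ) (v : TB k B n) (c : B) (a : A) :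
    Psi R n ((v ⊗ₜ[k] c) ⊗ₜ[k] a) = GG n (v ⊗ₜ[k] R (c ⊗ₜ[k] a)) := rfl

lemma GG_tmul (n : ℕ) (v : TB k B n) (a' : A) (b' : B) :
    GG n (v ⊗ₜ[k] (a' ⊗ₜ[k] b')) = (b' ⊗ₜ[k] v) ⊗ₜ[k] a' := rfl

end Aux5
section Aux6
set_option synthInstance.maxHeartbeats 1000000
set_option maxHeartbeats 1000000
variable {k A B : Type} [Field k] [Ring A] [Algebra k A] [Ring B] [Algebra k B]

lemma tau_ins (R : B ⊗[k] A →ₗ[k] A ⊗[k] B) :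
    ∀ (n j : ℕ), j ≤ n → ∀ (b : B) (x : TB k B n ⊗[k] A),
    tauOp R (n+1) (LinearMap.rTensor A (ins n j)
        ((TensorProduct.assoc k B (TB k B n) A).symm (b ⊗ₜ[k] x)))
      = LinearMap.rTensor A (ins n (j+1))
        ((TensorProduct.assoc k B (TB k B n) A).symm (b ⊗ₜ[k] tauOp R n x)) := by
  intro n
  match n with
  | 0 =>
      intro j hj b x
      interval_cases j
      induction x using TensorProduct.induction_on with
      | zero => simp only [TensorProduct.tmul_zero, map_zero]
      | tmul w a =>
          rw [TensorProduct.assoc_symm_tmul, LinearMap.rTensor_tmul, ins_zero,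
            tauOp_succ_eval, tauOp_zero_eval]
          show Psi R 0 ((b ⊗ₜ[k] w) ⊗ₜ[k] a) = _
          rw [Psi_tmul]
          generalize R (w ⊗ₜ[k] a) = s
          induction s using TensorProduct.induction_on with
          | zero => simp only [TensorProduct.tmul_zero, map_zero]
          | tmul a' b' => rw [GG_tmul]; rfl
          | add s₁ s₂ h₁ h₂ =>
              simp only [TensorProduct.tmul_add, map_add, h₁, h₂]
      | add x₁ x₂ h₁ h₂ =>
          simp only [TensorProduct.tmul_add, map_add, h₁, h₂]
  | (m+1) =>
      intro j hj b x
      induction x using TensorProduct.induction_on with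
      | zero => simp only [TensorProduct.tmul_zero, map_zero]
      | tmul w a =>
          rw [TensorProduct.assoc_symm_tmul, LinearMap.rTensor_tmul,
            tauOp_succ_eval, ePow_ins m j (by omega), tauOp_succ_eval]
          generalize ePow k (ModuleCat.of k B) m w = u
          induction u using TensorProduct.induction_on with
          | zero => simp only [TensorProduct.tmul_zero, TensorProduct.zero_tmul, map_zero]
          | tmul v c =>
              rw [TensorProduct.assoc_symm_tmul, LinearMap.rTensor_tmul, Psi_tmul, Psi_tmul]
              generalize R (c ⊗ₜ[k] a) = s
              induction s using TensorProduct.induction_on with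
              | zero => simp only [TensorProduct.tmul_zero, map_zero]
              | tmul a' b' => rw [GG_tmul, GG_tmul]; rfl
              | add s₁ s₂ h₁ h₂ =>
                  simp only [TensorProduct.tmul_add, map_add, h₁, h₂]
          | add u₁ u₂ h₁ h₂ =>
              simp only [TensorProduct.tmul_add, TensorProduct.add_tmul, map_add, h₁, h₂]
      | add x₁ x₂ h₁ h₂ =>
          simp only [TensorProduct.tmul_add, map_add, h₁, h₂]

lemma tau_ins_last (R : B ⊗[k] A →ₗ[k] A ⊗[k] B) (n : ℕ) (b : B) (y : A ⊗[k] TB k B n) :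
    tauOp R (n+1) (LinearMap.rTensor A (ins n (n+1))
        ((TensorProduct.assoc k B (TB k B n) A).symm
          (b ⊗ₜ[k] (TensorProduct.comm k A (TB k B n) y))))
      = TensorProduct.comm k A (TB k B (n+1))
          ((TensorProduct.assoc k A B (TB k B n))
            (LinearMap.rTensor (TB k B n) R
              ((TensorProduct.assoc k B A (TB k B n)).symm (b ⊗ₜ[k] y)))) := by
  induction y using TensorProduct.induction_on with
  | zero => simp only [TensorProduct.tmul_zero, map_zero]
  | tmul a' w =>
      rw [TensorProduct.comm_tmul, TensorProduct.assoc_symm_tmul, LinearMap.rTensor_tmul,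
        tauOp_succ_eval, ePow_ins_last, Psi_tmul, TensorProduct.assoc_symm_tmul,
        LinearMap.rTensor_tmul]
      generalize R (b ⊗ₜ[k] a') = s
      induction s using TensorProduct.induction_on with
      | zero => simp only [TensorProduct.tmul_zero, TensorProduct.zero_tmul, map_zero]
      | tmul a'' b'' => rw [GG_tmul]; rfl
      | add s₁ s₂ h₁ h₂ =>
          simp only [TensorProduct.tmul_add, TensorProduct.add_tmul, map_add, h₁, h₂]
  | add y₁ y₂ h₁ h₂ =>
      simp only [TensorProduct.tmul_add, map_add, h₁, h₂]

end Aux6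
section Aux7
set_option synthInstance.maxHeartbeats 1000000
set_option maxHeartbeats 1000000
variable {k A B : Type} [Field k] [Ring A] [Algebra k A] [Ring B] [Algebra k B]

lemma tau_iter (R : B ⊗[k] A →ₗ[k] A ⊗[k] B) (n : ℕ) :
    ∀ (m j : ℕ), j + m ≤ n + 1 → ∀ (b : B) (x : TB k B n ⊗[k] A),
    ((tauOp R (n+1) : Module.End k (TB k B (n+1) ⊗[k] A)) ^ m)
        (LinearMap.rTensor A (ins n j)
          ((TensorProduct.assoc k B (TB k B n) A).symm (b ⊗ₜ[k] x)))
      = LinearMap.rTensor A (ins n (j+m))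
          ((TensorProduct.assoc k B (TB k B n) A).symm
            (b ⊗ₜ[k] (((tauOp R n : Module.End k (TB k B n ⊗[k] A)) ^ m) x))) := by
  intro m
  induction m with
  | zero => intro j hj b x; simp only [pow_zero, Module.End.one_apply, Nat.add_zero]
  | succ m ih =>
      intro j hj b x
      have h1 : j ≤ n := by omega
      rw [pow_succ, Module.End.mul_apply, tau_ins R n j h1 b x, ih (j+1) (by omega),
        pow_succ, Module.End.mul_apply]
      have : j + 1 + m = j + (m + 1) := by omega
      rw [this]

lemma tau_pow (R : B ⊗[k] A →ₗ[k] A ⊗[k] B) :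
    ∀ (n : ℕ) (x : TB k B n ⊗[k] A),
    ((tauOp R n : Module.End k (TB k B n ⊗[k] A)) ^ (n+1)) x
      = TensorProduct.comm k A (TB k B n) (Phi R n x) := by
  intro n
  induction n with
  | zero =>
      intro x
      rw [pow_one]
      rfl
  | succ n ih =>
      intro x
      induction x using TensorProduct.induction_on with
      | zero => simp only [map_zero]
      | tmul t a =>
          induction t using TB_induction with
          | zero => simp only [TensorProduct.zero_tmul, map_zero]
          | tmul b w =>
              have harg : LinearMap.rTensor A (ins n 0)
                  ((TensorProduct.assoc k B (TB k B n) A).symm (b ⊗ₜ[k] (w ⊗ₜ[k] a)))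
                  = (b ⊗ₜ[k] w) ⊗ₜ[k] a := by
                rw [ins_zero_eq, LinearMap.rTensor_id]; rfl
              have hPhi : Phi R (n+1) ((b ⊗ₜ[k] w) ⊗ₜ[k] a)
                  = (TensorProduct.assoc k A B (TB k B n))
                      (LinearMap.rTensor (TB k B n) R
                        ((TensorProduct.assoc k B A (TB k B n)).symm
                          (b ⊗ₜ[k] Phi R n (w ⊗ₜ[k] a)))) := rfl
              rw [hPhi, ← tau_ins_last, ← ih, ← harg, pow_succ', Module.End.mul_apply,
                tau_iter R n (n+1) 0 (by omega)]
              norm_num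
          | add t₁ t₂ h₁ h₂ =>
              simp only [TensorProduct.add_tmul, map_add, h₁, h₂]
      | add x₁ x₂ h₁ h₂ =>
          simp only [map_add, h₁, h₂]

end Aux7
section Aux8
set_option synthInstance.maxHeartbeats 1000000
set_option maxHeartbeats 1000000
variable {k A B : Type} [Field k] [Ring A] [Algebra k A] [Ring B] [Algebra k B]

lemma mulOne_eval (n : ℕ) (z : TB k B n ⊗[k] A) :
    LinearMap.lTensor (TB k B n) (LinearMap.mul' k A)
      ((TensorProduct.assoc k (TB k B n) A A) (z ⊗ₜ[k] (1 : A))) = z := by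
  induction z using TensorProduct.induction_on with
  | zero => simp only [TensorProduct.zero_tmul, map_zero]
  | tmul w a =>
      rw [TensorProduct.assoc_tmul, LinearMap.lTensor_tmul, LinearMap.mul'_apply, mul_one]
  | add z₁ z₂ h₁ h₂ => simp only [TensorProduct.add_tmul, map_add, h₁, h₂]

lemma leftAct_one (Ri : A ⊗[k] B →ₗ[k] B ⊗[k] A) (n : ℕ) (a : A) (w : TB k B n) :
    leftAct Ri n (a ⊗ₜ[k] (w ⊗ₜ[k] (1 : A))) = Gamma Ri n (a ⊗ₜ[k] w) := by
  have h : leftAct Ri n (a ⊗ₜ[k] (w ⊗ₜ[k] (1 : A)))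
      = LinearMap.lTensor (TB k B n) (LinearMap.mul' k A)
          ((TensorProduct.assoc k (TB k B n) A A)
            ((Gamma Ri n (a ⊗ₜ[k] w)) ⊗ₜ[k] (1 : A))) := rfl
  rw [h, mulOne_eval]

lemma rightAct_eval (n : ℕ) (w : TB k B n) (a₀ a : A) :
    rightAct n ((w ⊗ₜ[k] a₀) ⊗ₜ[k] a) = w ⊗ₜ[k] (a₀ * a) := rfl

lemma sub_mem_commSpan (R : B ⊗[k] A ≃ₗ[k] A ⊗[k] B) (n : ℕ)
    (u : A ⊗[k] TB k B n) :
    Gamma R.symm.toLinearMap n u - TensorProduct.comm k A (TB k B n) u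
      ∈ Submodule.span k
          {y : TB k B n ⊗[k] A | ∃ (a : A) (z : TB k B n ⊗[k] A),
            y = leftAct R.symm.toLinearMap n (a ⊗ₜ[k] z) - rightAct n (z ⊗ₜ[k] a)} := by
  induction u using TensorProduct.induction_on with
  | zero => simp only [map_zero, sub_zero]; exact Submodule.zero_mem _
  | tmul a w =>
      apply Submodule.subset_span
      refine ⟨a, w ⊗ₜ[k] (1 : A), ?_⟩
      rw [leftAct_one, rightAct_eval, one_mul, TensorProduct.comm_tmul]
  | add u₁ u₂ h₁ h₂ =>
      have : Gamma R.symm.toLinearMap n (u₁ + u₂)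
            - TensorProduct.comm k A (TB k B n) (u₁ + u₂)
          = (Gamma R.symm.toLinearMap n u₁ - TensorProduct.comm k A (TB k B n) u₁)
            + (Gamma R.symm.toLinearMap n u₂ - TensorProduct.comm k A (TB k B n) u₂) := by
        rw [map_add, map_add]; abel
      rw [this]
      exact Submodule.add_mem _ h₁ h₂

end Aux8
/-- For every `x ∈ C_n`, the element `τ^{n+1}(x) − x` lies in the subspace
`span{a·y − y·a}` of commutators for the `A`-bimodule structure on `C_n`; hence `τ` induces
an operator of order `n+1` on the coinvariant space `C_n^A`. -/
theorem tau_pow_sub_id_mem_commutator_span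
    (k A B : Type) [Field k] [Ring A] [Algebra k A] [Ring B] [Algebra k B]
    (R : B ⊗[k] A ≃ₗ[k] A ⊗[k] B)
    (hqt : Quasitriangular k A B R.toLinearMap)
    (hn : RNormal k A B R.toLinearMap)
    (n : ℕ) (x : TB k B n ⊗[k] A) :
    ((tauOp R.toLinearMap n : Module.End k (TB k B n ⊗[k] A)) ^ (n+1)) x - x
      ∈ Submodule.span k
          {y : TB k B n ⊗[k] A | ∃ (a : A) (z : TB k B n ⊗[k] A),
            y = leftAct R.symm.toLinearMap n (a ⊗ₜ[k] z) - rightAct n (z ⊗ₜ[k] a)} := by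
  have h1 := sub_mem_commSpan R n (Phi R.toLinearMap n x)
  rw [gammaPhi R n x] at h1
  rw [tau_pow R.toLinearMap n x]
  have h2 : TensorProduct.comm k A (TB k B n) (Phi R.toLinearMap n x) - x
      = -(x - TensorProduct.comm k A (TB k B n) (Phi R.toLinearMap n x)) := by abel
  rw [h2]
  exact Submodule.neg_mem _ h1
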